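/- S is a p'-valenced scheme if and only if for every Z in the annihilator Ann_T(W_0) of the primary module, E_i^* Z = Z E_i^* = O for all indices i with k_i = 1. -/

import Mathlib

open Matrix

/-- An association scheme of class `d` on a finite set `X`: every pair is assigned a
relation index `r x y ∈ [0,d]`, relation `0` is the diagonal, there is a transpose
involution `inv`, each relation is attained, and the intersection numbers
`p i j ℓ = |{z : (x,z) ∈ R_i, (z,y) ∈ R_j}|` depend only on `ℓ = r x y`. -/
structure AssocScheme (X : Type*) [Fintype X] [DecidableEq X] (d : ℕ) where
  r : X → X → Fin (d + 1)
  r_diag : ∀ x y : X, r x y = 0 ↔ x = y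
  inv : Fin (d + 1) → Fin (d + 1)
  r_symm : ∀ x y : X, r y x = inv (r x y)
  p : Fin (d + 1) → Fin (d + 1) → Fin (d + 1) → ℕ
  card_p : ∀ (i j : Fin (d + 1)) (x y : X),
    (Finset.univ.filter fun z : X => r x z = i ∧ r z y = j).card = p i j (r x y)
  surj : ∀ i : Fin (d + 1), ∃ x y : X, r x y = i

namespace AssocScheme

variable {X : Type*} [Fintype X] [DecidableEq X] {d : ℕ}

/-- The valency `k_i = p_{i i'}^0` of the relation `R_i`. -/
def k (S : AssocScheme X d) (i : Fin (d + 1)) : ℕ := S.p i (S.inv i) 0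

variable (F : Type*) [Field F]

/-- The adjacency matrix of the relation `R_j` over `F`. -/
def adjM (S : AssocScheme X d) (j : Fin (d + 1)) : Matrix X X F :=
  Matrix.of fun y z => if S.r y z = j then 1 else 0

/-- The dual idempotent `E_i^*` with respect to the base point `x`. -/
def dualIdem (S : AssocScheme X d) (x : X) (i : Fin (d + 1)) : Matrix X X F :=
  Matrix.of fun y z => if y = z ∧ S.r x y = i then 1 else 0

/-- The all-one matrix `J`. -/
def Jmat : Matrix X X F := Matrix.of fun _ _ => 1

/-- The (modular) Terwilliger algebra of `S` with respect to `x`. -/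
def terw (S : AssocScheme X d) (x : X) : Subalgebra F (Matrix X X F) :=
  Algebra.adjoin F (Set.range (S.adjM F) ∪ Set.range (S.dualIdem F x))

/-- The primary module `W_0 = span_F {E_i^* 𝟏 : i ∈ [0,d]}`. -/
def W0 (S : AssocScheme X d) (x : X) : Submodule F (X → F) :=
  Submodule.span F (Set.range fun i : Fin (d + 1) => S.dualIdem F x i *ᵥ (1 : X → F))

section Sec
variable {F}
variable (S : AssocScheme X d) (x : X)

lemma r_self (w : X) : S.r w w = 0 := (S.r_diag w w).mpr rfl

lemma inv_invol (i : Fin (d + 1)) : S.inv (S.inv i) = i := by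
  obtain ⟨a, b, h⟩ := S.surj i
  rw [← h, ← S.r_symm a b, ← S.r_symm b a]

lemma r_eq_iff (y z : X) (j : Fin (d + 1)) : S.r y z = j ↔ S.r z y = S.inv j := by
  constructor
  · intro h; rw [S.r_symm y z, h]
  · intro h; have := S.r_symm z y; rw [h, S.inv_invol] at this; exact this

lemma inv_zero : S.inv 0 = 0 := by
  obtain ⟨a, b, h⟩ := S.surj 0
  have := S.r_symm a a
  rw [S.r_self] at this
  exact this.symm

lemma card_sphere (w : X) (i : Fin (d + 1)) :
    (Finset.univ.filter fun z : X => S.r w z = i).card = S.k i := by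
  have h := S.card_p i (S.inv i) w w
  rw [S.r_self] at h
  rw [show S.k i = S.p i (S.inv i) 0 from rfl, ← h]
  congr 1
  apply Finset.filter_congr
  intro z _
  simp only [iff_self_and, and_iff_left_iff_imp]
  intro hz
  rw [S.r_symm w z, hz]

lemma k_pos (i : Fin (d + 1)) : 0 < S.k i := by
  obtain ⟨a, b, h⟩ := S.surj i
  rw [← S.card_sphere a i]
  exact Finset.card_pos.mpr ⟨b, by simp [h]⟩

lemma k_zero : S.k 0 = 1 := by
  obtain ⟨a, b, h⟩ := S.surj 0
  rw [← S.card_sphere a 0]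
  rw [show (Finset.univ.filter fun z : X => S.r a z = 0) = {a} from ?_]
  · simp
  · ext z; simp [S.r_diag, eq_comm]

lemma dualIdem_mulVec (i : Fin (d + 1)) (w : X → F) :
    S.dualIdem F x i *ᵥ w = fun y => if S.r x y = i then w y else 0 := by
  funext y
  simp only [dualIdem, mulVec, dotProduct, Matrix.of_apply, ite_and]
  rw [Finset.sum_eq_single y]
  · by_cases h : S.r x y = i <;> simp [h]
  · intro b _ hb; simp [Ne.symm hb]
  · simp

lemma dualIdem_mul (i : Fin (d + 1)) (M : Matrix X X F) :
    S.dualIdem F x i * M = Matrix.of fun a b => if S.r x a = i then M a b else 0 := by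
  ext a b
  simp only [dualIdem, Matrix.mul_apply, Matrix.of_apply, ite_and]
  rw [Finset.sum_eq_single a]
  · by_cases h : S.r x a = i <;> simp [h]
  · intro c _ hc; simp [Ne.symm hc]
  · simp

lemma mul_dualIdem (i : Fin (d + 1)) (M : Matrix X X F) :
    M * S.dualIdem F x i = Matrix.of fun a b => if S.r x b = i then M a b else 0 := by
  ext a b
  simp only [dualIdem, Matrix.mul_apply, Matrix.of_apply, ite_and]
  rw [Finset.sum_eq_single b]
  · by_cases h : S.r x b = i <;> simp [h]
  · intro c _ hc; simp [hc]
  · simp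

lemma v_apply (i : Fin (d + 1)) :
    (S.dualIdem F x i *ᵥ (1 : X → F)) = fun y => if S.r x y = i then (1 : F) else 0 := by
  rw [S.dualIdem_mulVec]
  funext y
  simp

lemma v_mem (i : Fin (d + 1)) : S.dualIdem F x i *ᵥ (1 : X → F) ∈ S.W0 F x :=
  Submodule.subset_span ⟨i, rfl⟩

lemma dualIdem_mulVec_v (i ℓ : Fin (d + 1)) :
    S.dualIdem F x i *ᵥ (S.dualIdem F x ℓ *ᵥ (1 : X → F)) =
      if i = ℓ then S.dualIdem F x ℓ *ᵥ (1 : X → F) else 0 := by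
  rw [S.dualIdem_mulVec, S.v_apply]
  funext y
  by_cases h1 : S.r x y = i <;> by_cases h2 : S.r x y = ℓ <;>
    by_cases h3 : i = ℓ <;>
    simp_all [S.v_apply]

lemma adjM_mulVec_v (j i : Fin (d + 1)) :
    S.adjM F j *ᵥ (S.dualIdem F x i *ᵥ (1 : X → F)) =
      ∑ ℓ, (S.p i (S.inv j) ℓ : F) • (S.dualIdem F x ℓ *ᵥ (1 : X → F)) := by
  funext y
  have lhs : (S.adjM F j *ᵥ (S.dualIdem F x i *ᵥ (1 : X → F))) y
      = (S.p i (S.inv j) (S.r x y) : F) := by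
    rw [S.v_apply]
    simp only [adjM, mulVec, dotProduct, Matrix.of_apply]
    rw [← S.card_p i (S.inv j) x y]
    rw [Finset.card_filter]
    push_cast
    apply Finset.sum_congr rfl
    intro z _
    by_cases h1 : S.r y z = j <;> by_cases h2 : S.r x z = i
    · simp [h1, h2, (S.r_eq_iff y z j).mp h1]
    · simp [h1, h2]
    · have : ¬ S.r z y = S.inv j := fun hc => h1 ((S.r_eq_iff y z j).mpr hc)
      simp [h1, h2, this]
    · simp [h1, h2]
  rw [lhs]
  have : ∀ ℓ, ((S.p i (S.inv j) ℓ : F) • (S.dualIdem F x ℓ *ᵥ (1 : X → F))) y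
      = if S.r x y = ℓ then (S.p i (S.inv j) ℓ : F) else 0 := by
    intro ℓ
    rw [S.v_apply]
    by_cases h : S.r x y = ℓ <;> simp [h]
  rw [Finset.sum_apply]
  simp only [this]
  rw [Finset.sum_ite_eq Finset.univ (S.r x y) (fun ℓ => (S.p i (S.inv j) ℓ : F))]
  simp

lemma adjM_mem (j : Fin (d + 1)) : S.adjM F j ∈ S.terw F x :=
  Algebra.subset_adjoin (Or.inl ⟨j, rfl⟩)

lemma dualIdem_mem (i : Fin (d + 1)) : S.dualIdem F x i ∈ S.terw F x :=
  Algebra.subset_adjoin (Or.inr ⟨i, rfl⟩)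

lemma Jmat_eq_sum : (Jmat F : Matrix X X F) = ∑ j, S.adjM F j := by
  ext y z
  simp only [Jmat, Matrix.of_apply, Matrix.sum_apply, adjM]
  rw [Finset.sum_ite_eq Finset.univ (S.r y z) (fun _ => (1 : F))]
  simp

lemma Jmat_mem : (Jmat F : Matrix X X F) ∈ S.terw F x := by
  rw [S.Jmat_eq_sum]
  exact Subalgebra.sum_mem _ fun j _ => S.adjM_mem x j

lemma mulVec_W0 {M : Matrix X X F} (hM : M ∈ S.terw F x) :
    ∀ w ∈ S.W0 F x, M *ᵥ w ∈ S.W0 F x := by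
  induction hM using Algebra.adjoin_induction with
  | mem M hM =>
      intro w hw
      induction hw using Submodule.span_induction with
      | mem w hwg =>
          obtain ⟨i, rfl⟩ := hwg
          rcases hM with ⟨j, rfl⟩ | ⟨ℓ, rfl⟩
          · rw [S.adjM_mulVec_v x j i]
            exact Submodule.sum_mem _ fun ℓ _ => Submodule.smul_mem _ _ (S.v_mem x ℓ)
          · rw [S.dualIdem_mulVec_v x ℓ i]
            split
            · exact S.v_mem x i
            · exact Submodule.zero_mem _
      | zero => rw [Matrix.mulVec_zero]; exact Submodule.zero_mem _
      | add u v hu hv hMu hMv => rw [Matrix.mulVec_add]; exact Submodule.add_mem _ hMu hMv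
      | smul c u hu hMu => rw [Matrix.mulVec_smul]; exact Submodule.smul_mem _ _ hMu
  | algebraMap c =>
      intro w hw
      have : (algebraMap F (Matrix X X F) c) *ᵥ w = c • w := by
        funext y
        simp [Matrix.algebraMap_matrix_apply, mulVec, dotProduct, ite_mul]
      rw [this]
      exact Submodule.smul_mem _ _ hw
  | add M N hM hN hMw hNw =>
      intro w hw
      rw [Matrix.add_mulVec]
      exact Submodule.add_mem _ (hMw w hw) (hNw w hw)
  | mul M N hM hN hMw hNw =>
      intro w hw
      rw [← Matrix.mulVec_mulVec]
      exact hMw _ (hNw w hw)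

lemma adjM_transpose (j : Fin (d + 1)) : (S.adjM F j)ᵀ = (S.adjM F (S.inv j) : Matrix X X F) := by
  ext y z
  simp only [Matrix.transpose_apply, adjM, Matrix.of_apply]
  have : S.r z y = j ↔ S.r y z = S.inv j := by
    exact S.r_eq_iff z y j
  simp [this]

lemma dualIdem_transpose (i : Fin (d + 1)) :
    (S.dualIdem F x i)ᵀ = S.dualIdem F x i := by
  ext y z
  simp only [Matrix.transpose_apply, dualIdem, Matrix.of_apply]
  by_cases h : y = z
  · subst h; rfl
  · simp [h, Ne.symm h]

lemma transpose_mem {M : Matrix X X F} (hM : M ∈ S.terw F x) : Mᵀ ∈ S.terw F x := by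
  induction hM using Algebra.adjoin_induction with
  | mem M hM =>
      rcases hM with ⟨j, rfl⟩ | ⟨i, rfl⟩
      · rw [S.adjM_transpose]; exact S.adjM_mem x (S.inv j)
      · rw [S.dualIdem_transpose]; exact S.dualIdem_mem x i
  | algebraMap c =>
      have : (algebraMap F (Matrix X X F) c)ᵀ = algebraMap F (Matrix X X F) c := by
        ext y z
        simp only [Matrix.transpose_apply, Matrix.algebraMap_matrix_apply]
        by_cases h : y = z
        · subst h; rfl
        · simp [h, Ne.symm h]
      rw [this]; exact Subalgebra.algebraMap_mem _ c
  | add M N hM hN hMt hNt => rw [Matrix.transpose_add]; exact add_mem hMt hNt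
  | mul M N hM hN hMt hNt => rw [Matrix.transpose_mul]; exact mul_mem hNt hMt

lemma v_dot_v (i j : Fin (d + 1)) :
    (S.dualIdem F x i *ᵥ (1 : X → F)) ⬝ᵥ (S.dualIdem F x j *ᵥ (1 : X → F)) =
      if i = j then (S.k i : F) else 0 := by
  rw [S.v_apply, S.v_apply]
  simp only [dotProduct]
  by_cases h : i = j
  · subst h
    simp only [if_pos rfl]
    rw [← S.card_sphere x i, Finset.card_filter]
    push_cast
    apply Finset.sum_congr rfl
    intro z _
    by_cases hz : S.r x z = i <;> simp [hz]
  · rw [if_neg h]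
    apply Finset.sum_eq_zero
    intro z _
    by_cases h1 : S.r x z = i <;> by_cases h2 : S.r x z = j <;> simp_all

lemma ann_transpose (hk : ∀ i : Fin (d + 1), (S.k i : F) ≠ 0) {Z : Matrix X X F}
    (hZ : Z ∈ S.terw F x) (hann : ∀ v ∈ S.W0 F x, Z *ᵥ v = 0) :
    ∀ w ∈ S.W0 F x, Zᵀ *ᵥ w = 0 := by
  have key : ∀ u : X → F, ∀ w ∈ S.W0 F x, (Z *ᵥ u) ⬝ᵥ w = 0 := by
    intro u w hw
    set πu : X → F := ∑ ℓ, ((S.k ℓ : F)⁻¹ * ((S.dualIdem F x ℓ *ᵥ (1 : X → F)) ⬝ᵥ u)) •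
      (S.dualIdem F x ℓ *ᵥ (1 : X → F)) with hπ
    have hπmem : πu ∈ S.W0 F x :=
      Submodule.sum_mem _ fun ℓ _ => Submodule.smul_mem _ _ (S.v_mem x ℓ)
    have horth : ∀ i : Fin (d + 1), (u - πu) ⬝ᵥ (S.dualIdem F x i *ᵥ (1 : X → F)) = 0 := by
      intro i
      rw [sub_dotProduct]
      have : πu ⬝ᵥ (S.dualIdem F x i *ᵥ (1 : X → F))
          = u ⬝ᵥ (S.dualIdem F x i *ᵥ (1 : X → F)) := by
        rw [hπ]
        rw [show (∑ ℓ, ((S.k ℓ : F)⁻¹ * ((S.dualIdem F x ℓ *ᵥ (1 : X → F)) ⬝ᵥ u)) •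
              (S.dualIdem F x ℓ *ᵥ (1 : X → F))) ⬝ᵥ (S.dualIdem F x i *ᵥ (1 : X → F))
            = ∑ ℓ, (((S.k ℓ : F)⁻¹ * ((S.dualIdem F x ℓ *ᵥ (1 : X → F)) ⬝ᵥ u)) •
              (S.dualIdem F x ℓ *ᵥ (1 : X → F))) ⬝ᵥ (S.dualIdem F x i *ᵥ (1 : X → F)) from by
          simp only [dotProduct, Finset.sum_apply, Finset.sum_mul]
          exact Finset.sum_comm]
        rw [Finset.sum_eq_single i]
        · rw [smul_dotProduct, S.v_dot_v x i i, if_pos rfl, smul_eq_mul]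
          rw [dotProduct_comm]
          field_simp
          exact mul_div_cancel_left₀ _ (hk i)
        · intro ℓ _ hℓ
          rw [smul_dotProduct, S.v_dot_v x ℓ i, if_neg hℓ, smul_eq_mul, mul_zero]
        · simp
      rw [this, sub_self]
    have horthW : ∀ w' ∈ S.W0 F x, (u - πu) ⬝ᵥ w' = 0 := by
      intro w' hw'
      induction hw' using Submodule.span_induction with
      | mem w' hwg => obtain ⟨i, rfl⟩ := hwg; exact horth i
      | zero => simp
      | add a b ha hb hA hB => rw [dotProduct_add, hA, hB, add_zero]
      | smul c a ha hA => rw [dotProduct_smul, hA, smul_zero]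
    have hdecomp : Z *ᵥ u = Z *ᵥ (u - πu) := by
      rw [Matrix.mulVec_sub, hann πu hπmem, sub_zero]
    rw [hdecomp]
    have : (Z *ᵥ (u - πu)) ⬝ᵥ w = (u - πu) ⬝ᵥ (Zᵀ *ᵥ w) := by
      rw [Matrix.dotProduct_mulVec, Matrix.vecMul_transpose]
    rw [this]
    exact horthW _ (S.mulVec_W0 x (S.transpose_mem x hZ) w hw)
  intro w hw
  funext b
  have := key (Pi.single b 1) w hw
  rw [dotProduct_comm, Matrix.dotProduct_mulVec, ← Matrix.mulVec_transpose,
    dotProduct_single] at this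
  simpa using this

lemma dualIdem_idem (i : Fin (d + 1)) :
    (S.dualIdem F x i) * (S.dualIdem F x i) = S.dualIdem F x i := by
  rw [S.dualIdem_mul]
  ext a b
  simp only [Matrix.of_apply, dualIdem]
  by_cases h : S.r x a = i <;> simp [h]

end Sec

theorem pprime_valenced_iff_annihilator_thin (p : ℕ) [Fact p.Prime] [CharP F p]
    (S : AssocScheme X d) (x : X) :
    (∀ i : Fin (d + 1), ¬ p ∣ S.k i) ↔
      ∀ Z ∈ S.terw F x, (∀ v ∈ S.W0 F x, Z *ᵥ v = 0) →
        ∀ i : Fin (d + 1), S.k i = 1 →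
          S.dualIdem F x i * Z = 0 ∧ Z * S.dualIdem F x i = 0 := by
  constructor
  · intro hp Z hZ hann i hki
    have hk : ∀ j : Fin (d + 1), (S.k j : F) ≠ 0 := fun j hc =>
      hp j ((CharP.cast_eq_zero_iff F p _).mp hc)
    obtain ⟨y, hy⟩ : ∃ y, (Finset.univ.filter fun z : X => S.r x z = i) = {y} :=
      Finset.card_eq_one.mp (by rw [S.card_sphere x i, hki])
    have hsph : ∀ z : X, S.r x z = i ↔ z = y := by
      intro z
      constructor
      · intro h
        have : z ∈ ({y} : Finset X) := by rw [← hy]; simp [h]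
        simpa using this
      · intro hzy
        have hz : y ∈ Finset.univ.filter (fun z' : X => S.r x z' = i) := by
          rw [hy]; exact Finset.mem_singleton_self y
        rw [hzy]
        exact (Finset.mem_filter.mp hz).2
    have hvy : (S.dualIdem F x i *ᵥ (1 : X → F)) = Pi.single y 1 := by
      rw [S.v_apply]
      funext z
      by_cases h : z = y
      · subst h
        simp [(hsph z).mpr rfl]
      · have : ¬ S.r x z = i := fun hc => h ((hsph z).mp hc)
        simp [this, h]
    have hrow : Zᵀ *ᵥ Pi.single y 1 = 0 := by
      rw [← hvy]; exact S.ann_transpose x hk hZ hann _ (S.v_mem x i)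
    have hcol : Z *ᵥ Pi.single y 1 = 0 := by
      rw [← hvy]; exact hann _ (S.v_mem x i)
    constructor
    · ext a b
      rw [S.dualIdem_mul]
      simp only [Matrix.of_apply, Matrix.zero_apply]
      by_cases h : S.r x a = i
      · rw [if_pos h]
        rcases (hsph a).mp h with rfl
        have h1 : (Zᵀ *ᵥ Pi.single a (1 : F)) b = Z a b := by
          simp [Matrix.mulVec, dotProduct_single]
        rw [← h1, hrow]
        rfl
      · rw [if_neg h]
    · ext c b
      rw [S.mul_dualIdem]
      simp only [Matrix.of_apply, Matrix.zero_apply]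
      by_cases h : S.r x b = i
      · rw [if_pos h]
        rcases (hsph b).mp h with rfl
        have h1 : (Z *ᵥ Pi.single b (1 : F)) c = Z c b := by
          simp [Matrix.mulVec, dotProduct_single]
        rw [← h1, hcol]
        rfl
      · rw [if_neg h]
  · intro H
    by_contra hc
    push_neg at hc
    obtain ⟨a, ha⟩ := hc
    have hkaF : (S.k a : F) = 0 := (CharP.cast_eq_zero_iff F p _).mpr ha
    have hJv : (Jmat F : Matrix X X F) *ᵥ (S.dualIdem F x a *ᵥ (1 : X → F)) = 0 := by
      funext yy
      rw [S.v_apply]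
      simp only [Jmat, Matrix.mulVec, dotProduct, Matrix.of_apply, one_mul, Pi.zero_apply]
      rw [Finset.sum_boole, S.card_sphere x a, hkaF]
    have hZT : S.dualIdem F x 0 * (Jmat F * S.dualIdem F x a) ∈ S.terw F x :=
      mul_mem (S.dualIdem_mem x 0) (mul_mem (S.Jmat_mem x) (S.dualIdem_mem x a))
    have hann : ∀ v ∈ S.W0 F x,
        (S.dualIdem F x 0 * (Jmat F * S.dualIdem F x a)) *ᵥ v = 0 := by
      intro w hw
      induction hw using Submodule.span_induction with
      | mem w hwg =>
          obtain ⟨i, rfl⟩ := hwg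
          rw [← Matrix.mulVec_mulVec, ← Matrix.mulVec_mulVec, S.dualIdem_mulVec_v x a i]
          by_cases h : a = i
          · rw [if_pos h, ← h, hJv, Matrix.mulVec_zero]
          · rw [if_neg h, Matrix.mulVec_zero, Matrix.mulVec_zero]
      | zero => rw [Matrix.mulVec_zero]
      | add u v hu hv hA hB => rw [Matrix.mulVec_add, hA, hB, add_zero]
      | smul c u hu hA => rw [Matrix.mulVec_smul, hA, smul_zero]
    have h0 := (H _ hZT hann 0 S.k_zero).1
    rw [← mul_assoc, S.dualIdem_idem] at h0
    obtain ⟨z0, hz0⟩ : ∃ z0, S.r x z0 = a := by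
      have hpos := S.k_pos a
      rw [← S.card_sphere x a] at hpos
      obtain ⟨z0, hz0⟩ := Finset.card_pos.mp hpos
      exact ⟨z0, (Finset.mem_filter.mp hz0).2⟩
    have hone : (S.dualIdem F x 0 * ((Jmat F : Matrix X X F) * S.dualIdem F x a)) x z0 = 1 := by
      rw [S.mul_dualIdem, S.dualIdem_mul]
      simp [S.r_self, hz0, Jmat]
    rw [h0] at hone
    simp at hone

end AssocScheme
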